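/- arXiv:1808.04965 — 3 statements merged into one kernel-verified Lean document; each statement's English description precedes it below -/
import Mathlib

section
/- Let L : F^n → F^m be a linear map and 〈L〉 its span (dimension 1 family). Suppose rank(L) ≥ log_{|F|} δ^{-1} + 5. Then for every S ⊆ F^n of density at least δ and every y ∈ F^n, at least half of the pairs (s, s') ∈ S × S satisfy (〈L〉(s) + 〈L〉(y)) ∩ (〈L〉(s') + 〈L〉(y)) = 〈L〉(y), where 〈L〉(x) denotes the span of L(x). -/
set_option maxHeartbeats 1000000
set_option synthInstance.maxHeartbeats 200000

attribute [local instance] Classical.propDecidable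

theorem aux_finrank (p n m : ℕ) [Fact p.Prime]
    (L : (Fin n → ZMod p) →ₗ[ZMod p] (Fin m → ZMod p)) (a b : Fin m → ZMod p) :
    Module.finrank (ZMod p) (Submodule.comap L (Submodule.span (ZMod p) {a, b}))
      ≤ 2 + Module.finrank (ZMod p) (LinearMap.ker L) := by
  set P := Submodule.span (ZMod p) ({a, b} : Set (Fin m → ZMod p)) with hPdef
  have hP : Module.finrank (ZMod p) P ≤ 2 := by
    have h2 : (Set.toFinset ({a, b} : Set (Fin m → ZMod p))).card ≤ 2 := by
      rw [Set.toFinset_insert, Set.toFinset_singleton]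
      exact le_trans (Finset.card_insert_le _ _) (by simp)
    exact le_trans (finrank_span_le_card ({a, b} : Set (Fin m → ZMod p))) h2
  set Q := Submodule.comap L P
  have hrn := LinearMap.finrank_range_add_finrank_ker (L.domRestrict Q)
  have h1 : Module.finrank (ZMod p) (LinearMap.range (L.domRestrict Q)) ≤ 2 := by
    rw [LinearMap.range_domRestrict]
    exact le_trans (Submodule.finrank_mono (Submodule.map_comap_le L P)) hP
  have hker : LinearMap.ker L ≤ Q := by
    intro x hx
    simp only [Q, Submodule.mem_comap, LinearMap.mem_ker.mp hx]
    exact Submodule.zero_mem P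
  have h2 : Module.finrank (ZMod p) (LinearMap.ker (L.domRestrict Q))
      = Module.finrank (ZMod p) (LinearMap.ker L) := by
    rw [LinearMap.ker_domRestrict]
    exact (Submodule.comapSubtypeEquivOfLe hker).finrank_eq
  omega

theorem aux_count (p n m : ℕ) [Fact p.Prime]
    (L : (Fin n → ZMod p) →ₗ[ZMod p] (Fin m → ZMod p)) (a b : Fin m → ZMod p)
    (S : Finset (Fin n → ZMod p)) :
    (S.filter fun t => L t ∈ Submodule.span (ZMod p) ({a, b} : Set (Fin m → ZMod p))).card
      ≤ p ^ (2 + Module.finrank (ZMod p) (LinearMap.ker L)) := by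
  set P := Submodule.span (ZMod p) ({a, b} : Set (Fin m → ZMod p)) with hPdef
  calc (S.filter fun t => L t ∈ P).card
      ≤ (Finset.univ.filter fun t => L t ∈ P).card :=
        Finset.card_le_card (Finset.filter_subset_filter _ (Finset.subset_univ S))
    _ = Fintype.card {t // L t ∈ P} := (Fintype.card_subtype _).symm
    _ = Fintype.card (Submodule.comap L P) :=
        Fintype.card_congr (Equiv.subtypeEquivRight fun x => Iff.rfl)
    _ = p ^ Module.finrank (ZMod p) (Submodule.comap L P) := by
        rw [Module.card_eq_pow_finrank (K := ZMod p), ZMod.card]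
    _ ≤ p ^ (2 + Module.finrank (ZMod p) (LinearMap.ker L)) :=
        Nat.pow_le_pow_right (Fact.out : p.Prime).pos (aux_finrank p n m L a b)

theorem aux_mem (p m : ℕ) [Fact p.Prime] (u v w : Fin m → ZMod p)
    (h : ¬ ((Submodule.span (ZMod p) {u} ⊔ Submodule.span (ZMod p) {w}) ⊓
        (Submodule.span (ZMod p) {v} ⊔ Submodule.span (ZMod p) {w}) =
        Submodule.span (ZMod p) {w})) :
    v ∈ Submodule.span (ZMod p) ({u, w} : Set (Fin m → ZMod p)) := by
  have hle : Submodule.span (ZMod p) {w} ≤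
      (Submodule.span (ZMod p) {u} ⊔ Submodule.span (ZMod p) {w}) ⊓
      (Submodule.span (ZMod p) {v} ⊔ Submodule.span (ZMod p) {w}) :=
    le_inf le_sup_right le_sup_right
  obtain ⟨x, hx, hxw⟩ := SetLike.exists_of_lt (lt_of_le_of_ne hle (Ne.symm h))
  obtain ⟨y1, hy1, y2, hy2, hsum1⟩ := Submodule.mem_sup.mp hx.1
  obtain ⟨z1, hz1, z2, hz2, hsum2⟩ := Submodule.mem_sup.mp hx.2
  obtain ⟨a, ha⟩ := Submodule.mem_span_singleton.mp hy1
  obtain ⟨b, hb⟩ := Submodule.mem_span_singleton.mp hy2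
  obtain ⟨c, hc⟩ := Submodule.mem_span_singleton.mp hz1
  obtain ⟨d, hd⟩ := Submodule.mem_span_singleton.mp hz2
  by_cases hc0 : c = 0
  · exfalso
    apply hxw
    rw [← hsum2, ← hc, ← hd, hc0, zero_smul, zero_add]
    exact Submodule.smul_mem _ _ (Submodule.mem_span_singleton_self w)
  · have h3 : c • v = a • u + (b - d) • w := by
      have heq : a • u + b • w = c • v + d • w := by
        rw [ha, hb, hsum1, ← hsum2, hc, hd]
      calc c • v = (c • v + d • w) - d • w := by abel
        _ = (a • u + b • w) - d • w := by rw [heq]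
        _ = a • u + (b - d) • w := by rw [sub_smul]; abel
    have hv : v = c⁻¹ • (a • u + (b - d) • w) := by
      rw [← h3, inv_smul_smul₀ hc0]
    rw [hv]
    exact Submodule.smul_mem _ _ (add_mem
      (Submodule.smul_mem _ _ (Submodule.subset_span (by simp)))
      (Submodule.smul_mem _ _ (Submodule.subset_span (by simp))))

theorem stmt10 (p n m : ℕ) [Fact p.Prime]
    (L : (Fin n → ZMod p) →ₗ[ZMod p] (Fin m → ZMod p)) (δ : ℝ) (hδ : 0 < δ)
    (hrank : Real.logb (Fintype.card (ZMod p)) δ⁻¹ + 5 ≤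
      (Module.finrank (ZMod p) (LinearMap.range L) : ℝ))
    (S : Finset (Fin n → ZMod p))
    (hS : δ * (Fintype.card (Fin n → ZMod p) : ℝ) ≤ (S.card : ℝ))
    (y : Fin n → ZMod p) :
    (S ×ˢ S).card ≤ 2 * ((S ×ˢ S).filter fun q =>
      (Submodule.span (ZMod p) {L q.1} ⊔ Submodule.span (ZMod p) {L y}) ⊓
        (Submodule.span (ZMod p) {L q.2} ⊔ Submodule.span (ZMod p) {L y}) =
      Submodule.span (ZMod p) {L y}).card := by
  have hp : p.Prime := Fact.out
  have hp2 : 2 ≤ p := hp.two_le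
  set r := Module.finrank (ZMod p) (LinearMap.range L) with hrdef
  set kr := Module.finrank (ZMod p) (LinearMap.ker L) with hkrdef
  -- rank-nullity
  have hfin : Module.finrank (ZMod p) (Fin n → ZMod p) = n := by
    simp [Module.finrank_pi]
  have hrn : r + kr = n := by
    rw [hrdef, hkrdef, LinearMap.finrank_range_add_finrank_ker L, hfin]
  -- cardinality of ambient space
  have hcard : (Fintype.card (Fin n → ZMod p) : ℝ) = (p : ℝ) ^ n := by
    rw [Fintype.card_pi]
    simp [ZMod.card]
  -- bad pairs
  set pred : (Fin n → ZMod p) × (Fin n → ZMod p) → Prop := fun q =>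
      (Submodule.span (ZMod p) {L q.1} ⊔ Submodule.span (ZMod p) {L y}) ⊓
        (Submodule.span (ZMod p) {L q.2} ⊔ Submodule.span (ZMod p) {L y}) =
      Submodule.span (ZMod p) {L y} with hpreddef
  set B := (S ×ˢ S).filter fun q => ¬ pred q with hBdef
  have hsplit := Finset.card_filter_add_card_filter_not (s := S ×ˢ S) (p := pred)
  -- B ⊆ C
  set C := (S ×ˢ S).filter fun q =>
      L q.2 ∈ Submodule.span (ZMod p) ({L q.1, L y} : Set (Fin m → ZMod p)) with hCdef
  have hBC : B ⊆ C := by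
    intro q hq
    obtain ⟨hqSS, hq2⟩ := Finset.mem_filter.mp hq
    exact Finset.mem_filter.mpr ⟨hqSS, aux_mem p m (L q.1) (L q.2) (L y) hq2⟩
  -- count C
  have hCcount : C.card ≤ S.card * p ^ (2 + kr) := by
    rw [Finset.card_eq_sum_card_fiberwise (f := Prod.fst) (t := S)
      (fun q hq => (Finset.mem_product.mp (Finset.mem_filter.mp hq).1).1)]
    calc ∑ s ∈ S, (C.filter fun q => q.1 = s).card
        ≤ ∑ s ∈ S, p ^ (2 + kr) := by
          apply Finset.sum_le_sum
          intro s _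
          refine le_trans ?_ (aux_count p n m L (L s) (L y) S)
          apply Finset.card_le_card_of_injOn Prod.snd
          · intro q hq
            obtain ⟨hqC, hq1⟩ := Finset.mem_filter.mp hq
            obtain ⟨hqSS, hqmem⟩ := Finset.mem_filter.mp hqC
            refine Finset.mem_filter.mpr ⟨(Finset.mem_product.mp hqSS).2, ?_⟩
            rwa [hq1] at hqmem
          · intro q hq q' hq' hqq
            have h1 : q.1 = s := (Finset.mem_filter.mp hq).2
            have h1' : q'.1 = s := (Finset.mem_filter.mp hq').2
            exact Prod.ext (h1.trans h1'.symm) hqq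
      _ = S.card * p ^ (2 + kr) := by rw [Finset.sum_const, smul_eq_mul]
  have hBcount : B.card ≤ S.card * p ^ (2 + kr) := le_trans (Finset.card_le_card hBC) hCcount
  -- numeric part in ℝ
  have hpn_pos : (0:ℝ) < (p : ℝ) ^ n := by positivity
  have hS' : δ * (p : ℝ) ^ n ≤ (S.card : ℝ) := by rwa [hcard] at hS
  have hScard_le : (S.card : ℝ) ≤ (p : ℝ) ^ n := by
    rw [← hcard]
    exact_mod_cast Finset.card_le_univ S
  have hδ1 : δ ≤ 1 := by
    by_contra hcon
    push_neg at hcon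
    nlinarith
  have hinv1 : (1:ℝ) ≤ δ⁻¹ := by
    have := mul_inv_cancel₀ (ne_of_gt hδ)
    nlinarith [inv_pos.mpr hδ]
  have hb1 : (1:ℝ) < (Fintype.card (ZMod p) : ℝ) := by
    rw [ZMod.card]
    exact_mod_cast hp.one_lt
  have hr5 : 5 ≤ r := by
    have h0 : (0:ℝ) ≤ Real.logb (Fintype.card (ZMod p)) δ⁻¹ :=
      Real.logb_nonneg hb1 hinv1
    have : (5:ℝ) ≤ (r : ℝ) := by linarith
    exact_mod_cast this
  have hlogb : δ⁻¹ ≤ (p : ℝ) ^ (r - 5) := by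
    have h1 : Real.logb (Fintype.card (ZMod p)) δ⁻¹ ≤ (r : ℝ) - 5 := by linarith
    have h2 : δ⁻¹ ≤ (Fintype.card (ZMod p) : ℝ) ^ ((r : ℝ) - 5) :=
      (Real.logb_le_iff_le_rpow hb1 (inv_pos.mpr hδ)).mp h1
    rwa [ZMod.card, show ((r:ℝ) - 5) = ((r - 5 : ℕ) : ℝ) by
        push_cast [Nat.cast_sub hr5]; ring, Real.rpow_natCast] at h2
  have hone : (1:ℝ) ≤ δ * (p : ℝ) ^ (r - 5) := by
    calc (1:ℝ) = δ * δ⁻¹ := (mul_inv_cancel₀ (ne_of_gt hδ)).symm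
      _ ≤ δ * (p : ℝ) ^ (r - 5) := by
          apply mul_le_mul_of_nonneg_left hlogb (le_of_lt hδ)
  have h8 : (8:ℝ) * (p : ℝ) ^ (2 + kr) ≤ (S.card : ℝ) := by
    have hexp : 3 + (2 + kr) + (r - 5) = n := by omega
    have hppos : (0:ℝ) < (p:ℝ) := by positivity
    have h83 : (8:ℝ) ≤ (p:ℝ) ^ 3 := by
      calc (8:ℝ) = 2^3 := by norm_num
        _ ≤ (p:ℝ)^3 := by
            apply pow_le_pow_left₀ (by norm_num)
            exact_mod_cast hp2
    have hPpos : (0:ℝ) < (p:ℝ) ^ (2 + kr) := pow_pos hppos _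
    calc (8:ℝ) * (p : ℝ) ^ (2 + kr)
        ≤ (p:ℝ)^3 * (p : ℝ) ^ (2 + kr) := by nlinarith
      _ = ((p:ℝ)^3 * (p : ℝ) ^ (2 + kr)) * 1 := by ring
      _ ≤ ((p:ℝ)^3 * (p : ℝ) ^ (2 + kr)) * (δ * (p : ℝ) ^ (r - 5)) :=
          mul_le_mul_of_nonneg_left hone (by positivity)
      _ = δ * (p : ℝ) ^ (3 + (2 + kr) + (r - 5)) := by rw [pow_add, pow_add]; ring
      _ = δ * (p : ℝ) ^ n := by rw [hexp]
      _ ≤ (S.card : ℝ) := hS'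
  -- conclude
  have hfinal : 2 * B.card ≤ S.card * S.card := by
    have hreal : (2 * B.card : ℝ) ≤ (S.card : ℝ) * (S.card : ℝ) := by
      have hB' : (B.card : ℝ) ≤ (S.card : ℝ) * (p:ℝ) ^ (2 + kr) := by
        calc (B.card : ℝ) ≤ ((S.card * p ^ (2 + kr) : ℕ) : ℝ) := by exact_mod_cast hBcount
          _ = (S.card : ℝ) * (p:ℝ) ^ (2 + kr) := by push_cast; ring
      have hSnn : (0:ℝ) ≤ (S.card : ℝ) := Nat.cast_nonneg _
      nlinarith [pow_pos (show (0:ℝ) < (p:ℝ) by positivity) (2 + kr)]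
    exact_mod_cast hreal
  show (S ×ˢ S).card ≤ 2 * ((S ×ˢ S).filter pred).card
  rw [Finset.card_product] at hsplit ⊢
  have hBB : (Finset.filter (fun a => ¬ pred a) (S ×ˢ S)).card = B.card := rfl
  omega
end

section
/- Let k ≥ 1 and suppose every nonzero map in the span L̄ of a family L of linear maps F^n → F^m (with dim L̄ = k) has rank greater than 4k + log_{|F|} δ^{-1} + 1. Then for every S ⊆ F^n of density at least δ and every y ∈ F^n, Pr_{s,s' ∈ S}[(L̄(s) + L̄(y)) ∩ (L̄(s') + L̄(y)) ≠ L̄(y)] ≤ 1/2. -/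
attribute [local instance] Classical.propDecidable

open Submodule Module Finset

namespace Stmt12Aux

variable {p n m : ℕ} [Fact p.Prime]

lemma span_eval (𝓛 : Set ((Fin n → ZMod p) →ₗ[ZMod p] (Fin m → ZMod p))) (x : Fin n → ZMod p) :
    Submodule.span (ZMod p) ((fun L => L x) '' 𝓛)
      = Submodule.map (LinearMap.applyₗ x) (Submodule.span (ZMod p) 𝓛) := by
  rw [Submodule.map_span]
  rfl

lemma extract (𝓛 : Set ((Fin n → ZMod p) →ₗ[ZMod p] (Fin m → ZMod p))) (a b y : Fin n → ZMod p)
    (h : (Submodule.span (ZMod p) ((fun L => L a) '' 𝓛) ⊔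
            Submodule.span (ZMod p) ((fun L => L y) '' 𝓛)) ⊓
          (Submodule.span (ZMod p) ((fun L => L b) '' 𝓛) ⊔
            Submodule.span (ZMod p) ((fun L => L y) '' 𝓛)) ≠
        Submodule.span (ZMod p) ((fun L => L y) '' 𝓛)) :
    ∃ L1 L2, L1 ∈ Submodule.span (ZMod p) 𝓛 ∧ L2 ∈ Submodule.span (ZMod p) 𝓛 ∧ L1 ≠ 0 ∧
      L1 a - L2 b ∈ Submodule.span (ZMod p) ((fun L => L y) '' 𝓛) := by
  set Vy := Submodule.span (ZMod p) ((fun L => L y) '' 𝓛) with hVy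
  set W := (Submodule.span (ZMod p) ((fun L => L a) '' 𝓛) ⊔ Vy) ⊓
      (Submodule.span (ZMod p) ((fun L => L b) '' 𝓛) ⊔ Vy) with hW
  have hle : Vy ≤ W := le_inf le_sup_right le_sup_right
  have hnle : ¬ (W ≤ Vy) := fun hle2 => h (le_antisymm hle2 hle)
  obtain ⟨v, hv, hvn⟩ := SetLike.not_le_iff_exists.mp hnle
  obtain ⟨hv1, hv2⟩ := Submodule.mem_inf.mp hv
  obtain ⟨a1, ha1, w1, hw1, hsum1⟩ := Submodule.mem_sup.mp hv1
  obtain ⟨a2, ha2, w2, hw2, hsum2⟩ := Submodule.mem_sup.mp hv2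
  rw [span_eval] at ha1 ha2
  obtain ⟨L1, hL1, hL1e⟩ := Submodule.mem_map.mp ha1
  obtain ⟨L2, hL2, hL2e⟩ := Submodule.mem_map.mp ha2
  have hL1e' : L1 a = a1 := hL1e
  have hL2e' : L2 b = a2 := hL2e
  refine ⟨L1, L2, hL1, hL2, ?_, ?_⟩
  · rintro rfl
    apply hvn
    rw [← hsum1, ← hL1e']
    simpa using hw1
  · have : L1 a - L2 b = w2 - w1 := by
      rw [hL1e', hL2e']
      have := hsum1.trans hsum2.symm
      linear_combination (norm := module) this
    rw [this]
    exact Vy.sub_mem hw2 hw1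

lemma card_submodule {V : Type*} [AddCommGroup V] [Module (ZMod p) V] [Fintype V]
    (W : Submodule (ZMod p) V) :
    Fintype.card ↥W = p ^ Module.finrank (ZMod p) W := by
  haveI : NeZero p := ⟨(Fact.out : p.Prime).ne_zero⟩
  rw [card_eq_pow_finrank (K := ZMod p) (V := ↥W), ZMod.card]

lemma coset_count (W : Submodule (ZMod p) (Fin m → ZMod p))
    (L : (Fin n → ZMod p) →ₗ[ZMod p] (Fin m → ZMod p))
    (c : Fin m → ZMod p) (T : Finset (Fin n → ZMod p)) :
    (T.filter fun s => L s - c ∈ W).card ≤ Fintype.card ↥(W.comap L) := by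
  haveI : NeZero p := ⟨(Fact.out : p.Prime).ne_zero⟩
  rcases (T.filter fun s => L s - c ∈ W).eq_empty_or_nonempty with he | ⟨s0, hs0⟩
  · simp [he]
  · have hs0' : L s0 - c ∈ W := (Finset.mem_filter.mp hs0).2
    have hcard : (T.filter fun s => L s - c ∈ W).card ≤ ((W.comap L : Set (Fin n → ZMod p)).toFinset).card := by
      apply Finset.card_le_card_of_injOn (fun s => s - s0)
      · intro s hs
        rw [Finset.mem_coe, Set.mem_toFinset]
        have hsW : L s - c ∈ W := (Finset.mem_filter.mp hs).2
        have : L s - L s0 ∈ W := by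
          have := W.sub_mem hsW hs0'
          convert this using 1
          abel
        simpa [Submodule.mem_comap, map_sub] using this
      · intro x _ y _ hxy
        simpa using hxy
    refine hcard.trans (le_of_eq ?_)
    rw [Set.toFinset_card]
    exact Fintype.card_congr (Equiv.refl _)

lemma comap_dim (W : Submodule (ZMod p) (Fin m → ZMod p))
    (L : (Fin n → ZMod p) →ₗ[ZMod p] (Fin m → ZMod p)) :
    Module.finrank (ZMod p) ↥(W.comap L) + Module.finrank (ZMod p) ↥(LinearMap.range L)
      ≤ n + Module.finrank (ZMod p) ↥W := by
  set U := W.comap L with hU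
  have h2 := LinearMap.finrank_range_add_finrank_ker (L.domRestrict U)
  have h3 : Module.finrank (ZMod p) ↥(LinearMap.range (L.domRestrict U))
      ≤ Module.finrank (ZMod p) ↥W := by
    rw [LinearMap.range_domRestrict]
    exact Submodule.finrank_mono (Submodule.map_comap_le L W)
  have h4 : Module.finrank (ZMod p) ↥(LinearMap.ker (L.domRestrict U))
      ≤ Module.finrank (ZMod p) ↥(LinearMap.ker L) := by
    rw [LinearMap.ker_domRestrict]
    calc Module.finrank (ZMod p) ↥(Submodule.comap U.subtype (LinearMap.ker L))
        = Module.finrank (ZMod p)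
            ↥(Submodule.map U.subtype (Submodule.comap U.subtype (LinearMap.ker L))) :=
          (Submodule.finrank_map_subtype_eq _ _).symm
      _ ≤ _ := Submodule.finrank_mono
          (le_trans (le_of_eq (Submodule.map_comap_subtype _ _)) inf_le_right)
  have h5 := LinearMap.finrank_range_add_finrank_ker L
  rw [Module.finrank_fin_fun] at h5
  omega

end Stmt12Aux

set_option maxHeartbeats 1000000 in
theorem stmt12 (p n m k : ℕ) [Fact p.Prime] (hk : 1 ≤ k) (δ : ℝ) (hδ : 0 < δ)
    (𝓛 : Set ((Fin n → ZMod p) →ₗ[ZMod p] (Fin m → ZMod p))) (hfin : 𝓛.Finite)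
    (hdim : Module.finrank (ZMod p) (Submodule.span (ZMod p) 𝓛) = k)
    (hrank : ∀ L ∈ Submodule.span (ZMod p) 𝓛, L ≠ 0 →
      4 * (k : ℝ) + Real.logb (Fintype.card (ZMod p)) δ⁻¹ + 1 <
        (Module.finrank (ZMod p) (LinearMap.range L) : ℝ))
    (S : Finset (Fin n → ZMod p))
    (hS : δ * (Fintype.card (Fin n → ZMod p) : ℝ) ≤ (S.card : ℝ))
    (y : Fin n → ZMod p) :
    2 * ((S ×ˢ S).filter fun q =>
        (Submodule.span (ZMod p) ((fun L => L q.1) '' 𝓛) ⊔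
            Submodule.span (ZMod p) ((fun L => L y) '' 𝓛)) ⊓
          (Submodule.span (ZMod p) ((fun L => L q.2) '' 𝓛) ⊔
            Submodule.span (ZMod p) ((fun L => L y) '' 𝓛)) ≠
        Submodule.span (ZMod p) ((fun L => L y) '' 𝓛)).card ≤ (S ×ˢ S).card := by
  classical
  haveI : NeZero p := ⟨(Fact.out : p.Prime).ne_zero⟩
  have hp2 : 2 ≤ p := (Fact.out : p.Prime).two_le
  have hP1 : (1:ℝ) ≤ (p:ℝ) := by exact_mod_cast hp2.trans' (by norm_num)
  have hP1' : (1:ℝ) < (p:ℝ) := by exact_mod_cast hp2.trans_lt' (by norm_num)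
  have hPpos : (0:ℝ) < (p:ℝ) := by positivity
  haveI : Finite ((Fin n → ZMod p) →ₗ[ZMod p] (Fin m → ZMod p)) :=
    Finite.of_injective _ (DFunLike.coe_injective)
  haveI : Fintype ((Fin n → ZMod p) →ₗ[ZMod p] (Fin m → ZMod p)) := Fintype.ofFinite _
  set Vy := Submodule.span (ZMod p) ((fun L => L y) '' 𝓛) with hVydef
  -- finrank of Vy is at most k
  have hVyk : Module.finrank (ZMod p) ↥Vy ≤ k := by
    rw [hVydef, Stmt12Aux.span_eval]
    exact le_trans (Submodule.finrank_map_le _ _) (le_of_eq hdim)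
  -- the finset of maps in the span
  set Λ : Finset ((Fin n → ZMod p) →ₗ[ZMod p] (Fin m → ZMod p)) :=
    (Submodule.span (ZMod p) 𝓛 : Set _).toFinset with hΛdef
  have hΛmem : ∀ L, L ∈ Λ ↔ L ∈ Submodule.span (ZMod p) 𝓛 := by
    intro L; rw [hΛdef, Set.mem_toFinset]; rfl
  have hΛcard : Λ.card = p ^ k := by
    rw [hΛdef, Set.toFinset_card]
    rw [← hdim]
    exact Stmt12Aux.card_submodule _
  set Λ0 := Λ.erase 0 with hΛ0def
  set T := Λ0 ×ˢ Λ with hTdef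
  have hTcard : (T.card : ℝ) ≤ (p:ℝ) ^ (2 * k) := by
    rw [hTdef, Finset.card_product]
    calc ((Λ0.card * Λ.card : ℕ) : ℝ) ≤ ((Λ.card * Λ.card : ℕ) : ℝ) := by
          exact_mod_cast Nat.mul_le_mul_right _ (Finset.card_erase_le)
      _ = (p:ℝ) ^ (2*k) := by
          rw [hΛcard]; push_cast; rw [← pow_add]; ring_nf
  -- the bad set is covered by the union over pairs
  set B := ((S ×ˢ S).filter fun q =>
        (Submodule.span (ZMod p) ((fun L => L q.1) '' 𝓛) ⊔ Vy) ⊓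
          (Submodule.span (ZMod p) ((fun L => L q.2) '' 𝓛) ⊔ Vy) ≠ Vy) with hBdef
  have hcover : B ⊆ T.biUnion (fun pr => (S ×ˢ S).filter fun q => pr.1 q.1 - pr.2 q.2 ∈ Vy) := by
    intro q hq
    have hq' := Finset.mem_filter.mp hq
    obtain ⟨L1, L2, h1, h2, hne, hmem⟩ := Stmt12Aux.extract 𝓛 q.1 q.2 y hq'.2
    refine Finset.mem_biUnion.mpr ⟨(L1, L2), ?_, ?_⟩
    · exact Finset.mem_product.mpr ⟨Finset.mem_erase.mpr ⟨hne, (hΛmem L1).mpr h1⟩,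
        (hΛmem L2).mpr h2⟩
    · exact Finset.mem_filter.mpr ⟨hq'.1, hmem⟩
  -- per-pair counting in ℕ
  have pair_count : ∀ L1 L2 : ((Fin n → ZMod p) →ₗ[ZMod p] (Fin m → ZMod p)),
      ((S ×ˢ S).filter fun q => L1 q.1 - L2 q.2 ∈ Vy).card
        ≤ S.card * Fintype.card ↥(Vy.comap L1) := by
    intro L1 L2
    set Bp := (S ×ˢ S).filter fun q => L1 q.1 - L2 q.2 ∈ Vy with hBp
    have hfib : Bp.card = ∑ b ∈ S, (Bp.filter fun q => q.2 = b).card :=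
      Finset.card_eq_sum_card_fiberwise
        (fun q hq => (Finset.mem_product.mp (Finset.mem_filter.mp hq).1).2)
    rw [hfib]
    have hfb : ∀ b ∈ S, (Bp.filter fun q => q.2 = b).card ≤ Fintype.card ↥(Vy.comap L1) := by
      intro b _
      have hinj : (Bp.filter fun q => q.2 = b).card
          ≤ ((Finset.univ.filter fun s => L1 s - (L2 b) ∈ Vy)).card := by
        apply Finset.card_le_card_of_injOn Prod.fst
        · intro q hq
          have h1 := Finset.mem_filter.mp hq
          have h2 := Finset.mem_filter.mp h1.1
          refine Finset.mem_filter.mpr ⟨Finset.mem_univ _, ?_⟩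
          rw [← h1.2]
          exact h2.2
        · intro q hq q' hq' hqq'
          have h1 := (Finset.mem_filter.mp hq).2
          have h2 := (Finset.mem_filter.mp hq').2
          exact Prod.ext hqq' (h1.trans h2.symm)
      exact hinj.trans (Stmt12Aux.coset_count Vy L1 (L2 b) Finset.univ)
    calc ∑ b ∈ S, (Bp.filter fun q => q.2 = b).card
        ≤ ∑ _b ∈ S, Fintype.card ↥(Vy.comap L1) := Finset.sum_le_sum hfb
      _ = S.card * Fintype.card ↥(Vy.comap L1) := by
          rw [Finset.sum_const, smul_eq_mul]
  -- the key real bound for a nonzero map in the span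
  have hkey : ∀ L1 ∈ Submodule.span (ZMod p) 𝓛, L1 ≠ 0 →
      ((Fintype.card ↥(Vy.comap L1) : ℝ)) * (p:ℝ) ^ (3*k+1) ≤ δ * (p:ℝ) ^ n := by
    intro L1 hL1 hL1ne
    set fc := Module.finrank (ZMod p) ↥(Vy.comap L1) with hfc
    set r := Module.finrank (ZMod p) ↥(LinearMap.range L1) with hr
    have hdims : fc + r ≤ n + k :=
      le_trans (Stmt12Aux.comap_dim Vy L1) (by omega)
    have hcard : (Fintype.card ↥(Vy.comap L1) : ℝ) = (p:ℝ) ^ fc := by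
      rw [Stmt12Aux.card_submodule]; push_cast; rfl
    have hrb := hrank L1 hL1 hL1ne
    rw [ZMod.card] at hrb
    have hrp : (p:ℝ) ^ (4*k+1) * δ⁻¹ ≤ (p:ℝ) ^ r := by
      have hexp : (p:ℝ) ^ ((4 * (k:ℝ) + Real.logb (p:ℝ) δ⁻¹ + 1 : ℝ))
          = (p:ℝ) ^ (4*k+1) * δ⁻¹ := by
        rw [Real.rpow_add hPpos, Real.rpow_add hPpos,
          Real.rpow_logb hPpos (ne_of_gt hP1') (inv_pos.mpr hδ), Real.rpow_one]
        rw [show (4 * (k:ℝ)) = ((4*k : ℕ) : ℝ) by push_cast; ring, Real.rpow_natCast]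
        rw [pow_succ]
        ring
      calc (p:ℝ) ^ (4*k+1) * δ⁻¹
          = (p:ℝ) ^ ((4 * (k:ℝ) + Real.logb (p:ℝ) δ⁻¹ + 1 : ℝ)) := hexp.symm
        _ ≤ (p:ℝ) ^ ((r:ℕ) : ℝ) :=
            Real.rpow_le_rpow_of_exponent_le hP1 (le_of_lt hrb)
        _ = (p:ℝ) ^ r := Real.rpow_natCast _ _
    rw [hcard]
    have hPrpos : (0:ℝ) < (p:ℝ) ^ r := by positivity
    have h6 : (p:ℝ) ^ fc * (p:ℝ) ^ (3*k+1) * (p:ℝ) ^ r ≤ δ * (p:ℝ) ^ n * (p:ℝ) ^ r := by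
      calc (p:ℝ) ^ fc * (p:ℝ) ^ (3*k+1) * (p:ℝ) ^ r
          = (p:ℝ) ^ (fc + (3*k+1) + r) := by rw [← pow_add, ← pow_add]
        _ ≤ (p:ℝ) ^ (n + (4*k+1)) := by
            apply pow_le_pow_right₀ hP1
            omega
        _ = δ * (p:ℝ) ^ n * ((p:ℝ) ^ (4*k+1) * δ⁻¹) := by
            rw [pow_add]
            field_simp
        _ ≤ δ * (p:ℝ) ^ n * (p:ℝ) ^ r := by
            apply _root_.mul_le_mul_of_nonneg_left hrp
            positivity
    exact _root_.le_of_mul_le_mul_right h6 hPrpos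
  -- put everything together
  have hsum : (B.card : ℝ) ≤ ∑ pr ∈ T,
      ((S.card * Fintype.card ↥(Vy.comap pr.1) : ℕ) : ℝ) := by
    have h1 : B.card ≤ ∑ pr ∈ T, ((S ×ˢ S).filter fun q => pr.1 q.1 - pr.2 q.2 ∈ Vy).card :=
      le_trans (Finset.card_le_card hcover) (Finset.card_biUnion_le)
    have h2 : ∑ pr ∈ T, ((S ×ˢ S).filter fun q => pr.1 q.1 - pr.2 q.2 ∈ Vy).card
        ≤ ∑ pr ∈ T, S.card * Fintype.card ↥(Vy.comap pr.1) :=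
      Finset.sum_le_sum (fun pr _ => pair_count pr.1 pr.2)
    exact_mod_cast le_trans h1 h2
  set D := (S.card : ℝ) with hD
  have hDnn : 0 ≤ D := Nat.cast_nonneg _
  have hSn : δ * (p:ℝ) ^ n ≤ D := by
    calc δ * (p:ℝ) ^ n = δ * ((Fintype.card (Fin n → ZMod p) : ℝ)) := by
          congr 1
          rw [show Fintype.card (Fin n → ZMod p) = p ^ n by
            simp [Fintype.card_fun, ZMod.card]]
          push_cast; rfl
      _ ≤ D := hS
  have hterm : ∀ pr ∈ T, ((S.card * Fintype.card ↥(Vy.comap pr.1) : ℕ) : ℝ) * (p:ℝ)^(3*k+1)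
      ≤ D * (δ * (p:ℝ) ^ n) := by
    intro pr hpr
    have hmem := Finset.mem_product.mp hpr
    have h1 : pr.1 ∈ Submodule.span (ZMod p) 𝓛 :=
      (hΛmem pr.1).mp (Finset.mem_of_mem_erase hmem.1)
    have hne : pr.1 ≠ 0 := (Finset.mem_erase.mp hmem.1).1
    have := hkey pr.1 h1 hne
    push_cast
    calc (S.card : ℝ) * (Fintype.card ↥(Vy.comap pr.1) : ℝ) * (p:ℝ)^(3*k+1)
        = D * ((Fintype.card ↥(Vy.comap pr.1) : ℝ) * (p:ℝ)^(3*k+1)) := by ring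
      _ ≤ D * (δ * (p:ℝ) ^ n) := _root_.mul_le_mul_of_nonneg_left this hDnn
  have hB3 : (B.card : ℝ) * (p:ℝ)^(3*k+1) ≤ (p:ℝ)^(2*k) * (D * (δ * (p:ℝ)^n)) := by
    have hc : (0:ℝ) ≤ (p:ℝ)^(3*k+1) := by positivity
    calc (B.card : ℝ) * (p:ℝ)^(3*k+1)
        ≤ (∑ pr ∈ T, ((S.card * Fintype.card ↥(Vy.comap pr.1) : ℕ) : ℝ)) * (p:ℝ)^(3*k+1) :=
          _root_.mul_le_mul_of_nonneg_right hsum hc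
      _ = ∑ pr ∈ T, ((S.card * Fintype.card ↥(Vy.comap pr.1) : ℕ) : ℝ) * (p:ℝ)^(3*k+1) :=
          Finset.sum_mul _ _ _
      _ ≤ T.card • (D * (δ * (p:ℝ)^n)) := Finset.sum_le_card_nsmul _ _ _ hterm
      _ = (T.card : ℝ) * (D * (δ * (p:ℝ)^n)) := by rw [nsmul_eq_mul]
      _ ≤ (p:ℝ)^(2*k) * (D * (δ * (p:ℝ)^n)) := by
          apply _root_.mul_le_mul_of_nonneg_right hTcard
          exact _root_.mul_nonneg hDnn (_root_.mul_nonneg hδ.le (by positivity))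
  -- final arithmetic
  have hfinal : 2 * (B.card : ℝ) ≤ D * D := by
    have hc : (0:ℝ) < (p:ℝ)^(3*k+1) := by positivity
    have h2p : 2 * (p:ℝ)^(2*k) ≤ (p:ℝ)^(3*k+1) := by
      calc 2 * (p:ℝ)^(2*k) ≤ (p:ℝ) * (p:ℝ)^(3*k) := by
            apply _root_.mul_le_mul (show (2:ℝ) ≤ (p:ℝ) by exact_mod_cast hp2)
              (pow_le_pow_right₀ hP1 (by omega)) (by positivity) (by positivity)
        _ = (p:ℝ)^(3*k+1) := by rw [pow_succ]; ring
    have hDD : (0:ℝ) ≤ D * D := _root_.mul_nonneg hDnn hDnn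
    have hstep : (B.card : ℝ) * (p:ℝ)^(3*k+1) ≤ (p:ℝ)^(2*k) * (D * D) := by
      refine hB3.trans (_root_.mul_le_mul_of_nonneg_left ?_ (by positivity))
      exact _root_.mul_le_mul_of_nonneg_left hSn hDnn
    apply _root_.le_of_mul_le_mul_right _ hc
    calc 2 * (B.card : ℝ) * (p:ℝ)^(3*k+1)
        = 2 * ((B.card : ℝ) * (p:ℝ)^(3*k+1)) := by ring
      _ ≤ 2 * ((p:ℝ)^(2*k) * (D * D)) :=
          _root_.mul_le_mul_of_nonneg_left hstep (by norm_num)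
      _ = (2 * (p:ℝ)^(2*k)) * (D * D) := by ring
      _ ≤ (p:ℝ)^(3*k+1) * (D * D) := _root_.mul_le_mul_of_nonneg_right h2p hDD
      _ = D * D * (p:ℝ)^(3*k+1) := mul_comm _ _
  have hgoal : 2 * B.card ≤ S.card * S.card := by
    rw [hD] at hfinal
    exact_mod_cast hfinal
  calc 2 * B.card ≤ S.card * S.card := hgoal
    _ = (S ×ˢ S).card := (Finset.card_product S S).symm
end

section
/- For each y ∈ F^n, let U_y ⊆ F^m be a subspace of dimension d, and let L_y be finite collections of affine maps F^n → F^m. Sample a random function f : F^n → F^m by picking f(x) ∈ U_x uniformly and independently for each x. Suppose for a proportion at least 1/8 of triples (y, z, w) ∈ (F^n)³ there exist a ∈ U_{y+z}, b ∈ U_z, c ∈ U_{y+w}, d' ∈ U_w with a - b = c - d' ≠ 0, b ∉ span(L_z(z)), d' ∉ span(L_w(w)). Then Pr over (y,z,w) and f of the event [f(y+z) - f(z) = f(y+w) - f(w), f(z) ∈ U_z \ span(L_z(z)), f(w) ∈ U_w \ span(L_w(w))] is at least (1/8)·|F|^{-4d}. -/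
attribute [local instance] Classical.propDecidable

section Stmt13Aux

variable (p n m d : ℕ) [Fact p.Prime]

/-- span of the evaluations of the affine maps attached to `z`, at `z` -/
def stmt13Sp
    (𝓛 : (Fin n → ZMod p) →
      Set (((Fin n → ZMod p) →ₗ[ZMod p] (Fin m → ZMod p)) × (Fin m → ZMod p)))
    (z : Fin n → ZMod p) : Submodule (ZMod p) (Fin m → ZMod p) :=
  Submodule.span (ZMod p) ((fun Lb => Lb.1 z + Lb.2) '' 𝓛 z)

/-- the event, as a predicate on `(f, t)` -/
def stmt13Ev (U : (Fin n → ZMod p) → Submodule (ZMod p) (Fin m → ZMod p))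
    (𝓛 : (Fin n → ZMod p) →
      Set (((Fin n → ZMod p) →ₗ[ZMod p] (Fin m → ZMod p)) × (Fin m → ZMod p)))
    (f : (Fin n → ZMod p) → (Fin m → ZMod p))
    (t : (Fin n → ZMod p) × (Fin n → ZMod p) × (Fin n → ZMod p)) : Prop :=
  f (t.1 + t.2.1) - f t.2.1 = f (t.1 + t.2.2) - f t.2.2 ∧
  f t.2.1 ∈ U t.2.1 ∧ f t.2.1 ∉ stmt13Sp p n m 𝓛 t.2.1 ∧
  f t.2.2 ∈ U t.2.2 ∧ f t.2.2 ∉ stmt13Sp p n m 𝓛 t.2.2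

/-- number of admissible `f` realizing the event at `t` -/
noncomputable def stmt13E (U : (Fin n → ZMod p) → Submodule (ZMod p) (Fin m → ZMod p))
    (𝓛 : (Fin n → ZMod p) →
      Set (((Fin n → ZMod p) →ₗ[ZMod p] (Fin m → ZMod p)) × (Fin m → ZMod p)))
    (t : (Fin n → ZMod p) × (Fin n → ZMod p) × (Fin n → ZMod p)) : ℕ :=
  (Finset.univ.filter fun f : (Fin n → ZMod p) → (Fin m → ZMod p) =>
    (∀ x, f x ∈ U x) ∧ stmt13Ev p n m U 𝓛 f t).card

end Stmt13Aux

section Stmt13Counts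

variable {p n m d : ℕ} [Fact p.Prime]

/-- counting functions with prescribed values on a finite set `s` -/
lemma stmt13_count
    (U : (Fin n → ZMod p) → Submodule (ZMod p) (Fin m → ZMod p))
    (hU : ∀ y, Module.finrank (ZMod p) (U y) = d)
    (s : Finset (Fin n → ZMod p)) (g : (Fin n → ZMod p) → (Fin m → ZMod p))
    (hg : ∀ x ∈ s, g x ∈ U x) :
    (Finset.univ.filter fun f : (Fin n → ZMod p) → (Fin m → ZMod p) =>
        (∀ x, f x ∈ U x) ∧ ∀ x ∈ s, f x = g x).card
      = (p ^ d) ^ (Fintype.card (Fin n → ZMod p) - s.card) := by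
  classical
  rw [← Fintype.card_subtype]
  have e : {f : (Fin n → ZMod p) → (Fin m → ZMod p) //
      (∀ x, f x ∈ U x) ∧ ∀ x ∈ s, f x = g x} ≃
      (∀ x : {x : Fin n → ZMod p // x ∉ s}, U x.1) :=
    { toFun := fun f x => ⟨f.1 x.1, f.2.1 x.1⟩
      invFun := fun h => ⟨fun x => if hx : x ∈ s then g x else (h ⟨x, hx⟩ : Fin m → ZMod p), by
        refine ⟨fun x => ?_, fun x hx => by simp [hx]⟩
        by_cases hx : x ∈ s
        · simpa [hx] using hg x hx
        · simpa [hx] using (h ⟨x, hx⟩).2⟩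
      left_inv := fun f => by
        apply Subtype.ext
        funext x
        by_cases hx : x ∈ s
        · simp [hx, f.2.2 x hx]
        · simp [hx]
      right_inv := fun h => by
        funext x
        apply Subtype.ext
        simp [x.2] }
  rw [Fintype.card_congr e, Fintype.card_pi]
  have hcard : ∀ x : {x : Fin n → ZMod p // x ∉ s}, Fintype.card (U x.1) = p ^ d := by
    intro x
    rw [Module.card_eq_pow_finrank (K := ZMod p), hU, ZMod.card]
  rw [Finset.prod_congr rfl fun x _ => hcard x, Finset.prod_const, Finset.card_univ]
  congr 1
  rw [Fintype.card_subtype_compl]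
  congr 1
  simp [Fintype.card_subtype]

lemma stmt13_count_ge
    (U : (Fin n → ZMod p) → Submodule (ZMod p) (Fin m → ZMod p))
    (hU : ∀ y, Module.finrank (ZMod p) (U y) = d)
    (P : ((Fin n → ZMod p) → (Fin m → ZMod p)) → Prop)
    (s : Finset (Fin n → ZMod p)) (g : (Fin n → ZMod p) → (Fin m → ZMod p))
    (hg : ∀ x ∈ s, g x ∈ U x)
    (hev : ∀ f : (Fin n → ZMod p) → (Fin m → ZMod p), (∀ x ∈ s, f x = g x) → P f) :
    (p ^ d) ^ (Fintype.card (Fin n → ZMod p) - s.card)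
      ≤ (Finset.univ.filter fun f : (Fin n → ZMod p) → (Fin m → ZMod p) =>
          (∀ x, f x ∈ U x) ∧ P f).card := by
  rw [← stmt13_count U hU s g hg]
  apply Finset.card_le_card
  intro f hf
  simp only [Finset.mem_filter] at hf ⊢
  exact ⟨hf.1, hf.2.1, hev f hf.2.2⟩

omit [Fact p.Prime] in
lemma stmt13_pow {p : ℕ} (hp : 1 ≤ p) (Q sc k r : ℕ) (h : Q + r ≤ Q - sc + k) {E : ℕ}
    (hE : (p ^ d) ^ (Q - sc) ≤ E) :
    p ^ (r * d) * (p ^ d) ^ Q ≤ p ^ (k * d) * E := by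
  calc p ^ (r * d) * (p ^ d) ^ Q = p ^ (r * d + d * Q) := by rw [pow_add, pow_mul, pow_mul]
    _ ≤ p ^ (k * d + d * (Q - sc)) := by
        apply Nat.pow_le_pow_right hp
        have := Nat.mul_le_mul_left d h
        nlinarith [this]
    _ = p ^ (k * d) * (p ^ d) ^ (Q - sc) := by rw [pow_add, pow_mul, pow_mul]
    _ ≤ p ^ (k * d) * E := Nat.mul_le_mul_left _ hE

end Stmt13Counts

section Stmt13PerTriple

variable {p n m d : ℕ} [Fact p.Prime]
variable (U : (Fin n → ZMod p) → Submodule (ZMod p) (Fin m → ZMod p))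
variable (𝓛 : (Fin n → ZMod p) →
      Set (((Fin n → ZMod p) →ₗ[ZMod p] (Fin m → ZMod p)) × (Fin m → ZMod p)))

lemma stmt13_E_ge (hU : ∀ y, Module.finrank (ZMod p) (U y) = d)
    (t : (Fin n → ZMod p) × (Fin n → ZMod p) × (Fin n → ZMod p))
    (s : Finset (Fin n → ZMod p)) (g : (Fin n → ZMod p) → (Fin m → ZMod p))
    (hg : ∀ x ∈ s, g x ∈ U x)
    (hev : ∀ f : (Fin n → ZMod p) → (Fin m → ZMod p),
      (∀ x ∈ s, f x = g x) → stmt13Ev p n m U 𝓛 f t) :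
    (p ^ d) ^ (Fintype.card (Fin n → ZMod p) - s.card) ≤ stmt13E p n m U 𝓛 t :=
  stmt13_count_ge U hU _ s g hg hev

lemma stmt13_good (hU : ∀ y, Module.finrank (ZMod p) (U y) = d)
    (y z w : Fin n → ZMod p) (a b c d' : Fin m → ZMod p)
    (ha : a ∈ U (y + z)) (hb : b ∈ U z) (hc : c ∈ U (y + w)) (hd : d' ∈ U w)
    (heq : a - b = c - d')
    (hbs : b ∉ stmt13Sp p n m 𝓛 z) (hds : d' ∉ stmt13Sp p n m 𝓛 w)
    (h1 : y ≠ z - w) (h2 : y ≠ w - z) :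
    (p ^ d) ^ (Fintype.card (Fin n → ZMod p))
      ≤ p ^ (4 * d) * stmt13E p n m U 𝓛 (y, z, w) := by
  have hp1 : 1 ≤ p := (Fact.out (p := p.Prime)).pos
  -- produce a prescribed-values set `s` of size ≤ 4 forcing the event
  have key : ∃ s : Finset (Fin n → ZMod p), ∃ g : (Fin n → ZMod p) → (Fin m → ZMod p), s.card ≤ 4 ∧ (∀ x ∈ s, g x ∈ U x) ∧
      (∀ f : (Fin n → ZMod p) → (Fin m → ZMod p),
        (∀ x ∈ s, f x = g x) → stmt13Ev p n m U 𝓛 f (y, z, w)) := by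
    by_cases hy : y = 0
    · subst hy
      by_cases hzw : z = w
      · subst hzw
        refine ⟨{z}, fun _ => b, by simp, by simpa using hb, fun f hf => ?_⟩
        have hz := hf z (Finset.mem_singleton_self z)
        exact ⟨rfl, by rw [hz]; exact hb, by rw [hz]; exact hbs,
          by rw [hz]; exact hb, by rw [hz]; exact hbs⟩
      · refine ⟨{z, w}, fun x => if x = z then b else d', ?_, ?_, fun f hf => ?_⟩
        · exact (Finset.card_insert_le _ _).trans (by simp)
        · intro x hx
          rcases Finset.mem_insert.mp hx with rfl | hx
          · simpa using hb
          · rw [Finset.mem_singleton] at hx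
            subst hx
            simpa [Ne.symm hzw] using hd
        · have hz : f z = b := by
            rw [hf z (by simp)]; simp
          have hw : f w = d' := by
            rw [hf w (by simp)]; simp [Ne.symm hzw]
          refine ⟨by simp [zero_add], by rw [hz]; exact hb, by rw [hz]; exact hbs,
            by rw [hw]; exact hd, by rw [hw]; exact hds⟩
    · have hyz : y + z ≠ z := fun h => hy (by rwa [add_eq_right] at h)
      have hyw : y + w ≠ w := fun h => hy (by rwa [add_eq_right] at h)
      by_cases hzw : z = w
      · subst hzw
        refine ⟨{y + z, z}, fun x => if x = z then b else a, ?_, ?_, fun f hf => ?_⟩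
        · exact (Finset.card_insert_le _ _).trans (by simp)
        · intro x hx
          rcases Finset.mem_insert.mp hx with rfl | hx
          · simpa [hyz] using ha
          · rw [Finset.mem_singleton] at hx
            subst hx
            simpa using hb
        · have hz : f z = b := by
            rw [hf z (by simp)]; simp
          have hyzv : f (y + z) = a := by
            rw [hf (y + z) (by simp)]; simp [hyz]
          exact ⟨rfl, by rw [hz]; exact hb, by rw [hz]; exact hbs,
            by rw [hz]; exact hb, by rw [hz]; exact hbs⟩
      · -- all four points distinct
        have d3 : y + z ≠ w := fun h => h2 (eq_sub_of_add_eq h)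
        have d4 : z ≠ y + w := fun h => h1 (eq_sub_of_add_eq h.symm)
        have d2 : y + z ≠ y + w := fun h => hzw (by rwa [add_right_inj] at h)
        refine ⟨{y + z, z, y + w, w},
          fun x => if x = y + z then a else if x = z then b else if x = y + w then c else d',
          ?_, ?_, fun f hf => ?_⟩
        · exact (Finset.card_insert_le _ _).trans (Nat.succ_le_succ
            ((Finset.card_insert_le _ _).trans (Nat.succ_le_succ
              (Finset.card_insert_le _ _ |>.trans (by simp)))))
        · intro x hx
          simp only [Finset.mem_insert, Finset.mem_singleton] at hx
          rcases hx with rfl | rfl | rfl | rfl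
          · simpa using ha
          · simpa [Ne.symm hyz] using hb
          · simpa [Ne.symm d2, Ne.symm d4] using hc
          · simpa [Ne.symm d3, Ne.symm hzw, Ne.symm hyw] using hd
        · have e1 : f (y + z) = a := by rw [hf (y + z) (by simp)]; simp
          have e2 : f z = b := by rw [hf z (by simp)]; simp [Ne.symm hyz]
          have e3 : f (y + w) = c := by
            rw [hf (y + w) (by simp)]; simp [Ne.symm d2, Ne.symm d4]
          have e4 : f w = d' := by
            rw [hf w (by simp)]; simp [Ne.symm d3, Ne.symm hzw, Ne.symm hyw]
          refine ⟨?_, by rw [e2]; exact hb, by rw [e2]; exact hbs,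
            by rw [e4]; exact hd, by rw [e4]; exact hds⟩
          show f (y + z) - f z = f (y + w) - f w
          rw [e1, e2, e3, e4]; exact heq
  obtain ⟨s, g, hsc, hg, hev⟩ := key
  have h := stmt13_pow (d := d) hp1 (Fintype.card (Fin n → ZMod p)) s.card 4 0 (by omega)
    (stmt13_E_ge U 𝓛 hU (y, z, w) s g hg hev)
  simpa using h

lemma stmt13_bad (hU : ∀ y, Module.finrank (ZMod p) (U y) = d)
    (z w : Fin n → ZMod p) (b d' : Fin m → ZMod p)
    (hb : b ∈ U z) (hd : d' ∈ U w)
    (hbs : b ∉ stmt13Sp p n m 𝓛 z) (hds : d' ∉ stmt13Sp p n m 𝓛 w) :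
    3 * (p ^ d) ^ (Fintype.card (Fin n → ZMod p))
      ≤ p ^ (4 * d) * stmt13E p n m U 𝓛 (0, z, w) := by
  have hp2 : 2 ≤ p := (Fact.out (p := p.Prime)).two_le
  have hp1 : 1 ≤ p := le_trans (by norm_num) hp2
  -- d ≥ 1
  have hb0 : b ≠ 0 := fun h => hbs (h ▸ Submodule.zero_mem _)
  have hnt : Nontrivial (U z) :=
    ⟨⟨⟨b, hb⟩, 0, fun hcon => hb0 (congrArg Subtype.val hcon)⟩⟩
  have hd1 : 1 ≤ d := by
    have hpos : 0 < Module.finrank (ZMod p) (U z) := Module.finrank_pos_iff.mpr hnt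
    rw [hU] at hpos
    exact hpos
  have key : ∃ s : Finset (Fin n → ZMod p), ∃ g : (Fin n → ZMod p) → (Fin m → ZMod p), s.card ≤ 2 ∧ (∀ x ∈ s, g x ∈ U x) ∧
      (∀ f : (Fin n → ZMod p) → (Fin m → ZMod p),
        (∀ x ∈ s, f x = g x) → stmt13Ev p n m U 𝓛 f (0, z, w)) := by
    by_cases hzw : z = w
    · subst hzw
      refine ⟨{z}, fun _ => b, by simp, by simpa using hb, fun f hf => ?_⟩
      have hz := hf z (Finset.mem_singleton_self z)
      exact ⟨rfl, by rw [hz]; exact hb, by rw [hz]; exact hbs,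
        by rw [hz]; exact hb, by rw [hz]; exact hbs⟩
    · refine ⟨{z, w}, fun x => if x = z then b else d', ?_, ?_, fun f hf => ?_⟩
      · exact (Finset.card_insert_le _ _).trans (by simp)
      · intro x hx
        rcases Finset.mem_insert.mp hx with rfl | hx
        · simpa using hb
        · rw [Finset.mem_singleton] at hx
          subst hx
          simpa [Ne.symm hzw] using hd
      · have hz : f z = b := by
          rw [hf z (by simp)]; simp
        have hw : f w = d' := by
          rw [hf w (by simp)]; simp [Ne.symm hzw]
        refine ⟨by simp [zero_add], by rw [hz]; exact hb, by rw [hz]; exact hbs,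
          by rw [hw]; exact hd, by rw [hw]; exact hds⟩
  obtain ⟨s, g, hsc, hg, hev⟩ := key
  have h := stmt13_pow (d := d) hp1 (Fintype.card (Fin n → ZMod p)) s.card 4 2 (by omega)
    (stmt13_E_ge U 𝓛 hU (0, z, w) s g hg hev)
  calc 3 * (p ^ d) ^ (Fintype.card (Fin n → ZMod p))
      ≤ p ^ (2 * d) * (p ^ d) ^ (Fintype.card (Fin n → ZMod p)) := by
        apply Nat.mul_le_mul_right
        calc 3 ≤ 2 ^ (2 * 1) := by norm_num
          _ ≤ p ^ (2 * 1) := Nat.pow_le_pow_left hp2 _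
          _ ≤ p ^ (2 * d) := Nat.pow_le_pow_right hp1 (by omega)
    _ ≤ p ^ (4 * d) * stmt13E p n m U 𝓛 (0, z, w) := h

end Stmt13PerTriple

theorem stmt13 (p n m d : ℕ) [Fact p.Prime]
    (U : (Fin n → ZMod p) → Submodule (ZMod p) (Fin m → ZMod p))
    (hU : ∀ y, Module.finrank (ZMod p) (U y) = d)
    -- collections of affine maps x ↦ T x + b, encoded by pairs (T, b); 𝓛 y is the
    -- collection attached to y, and `spanEval y x` is the span of {L(x) : L ∈ 𝓛 y}
    (𝓛 : (Fin n → ZMod p) →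
      Set (((Fin n → ZMod p) →ₗ[ZMod p] (Fin m → ZMod p)) × (Fin m → ZMod p)))
    (hfin : ∀ y, (𝓛 y).Finite)
    (hWitness : (Fintype.card (Fin n → ZMod p) : ℝ) ^ 3 ≤ 8 *
      ((Finset.univ.filter fun t : (Fin n → ZMod p) × (Fin n → ZMod p) × (Fin n → ZMod p) =>
        ∃ a ∈ U (t.1 + t.2.1), ∃ b ∈ U t.2.1, ∃ c ∈ U (t.1 + t.2.2), ∃ d' ∈ U t.2.2,
          a - b = c - d' ∧ a - b ≠ 0 ∧
          b ∉ Submodule.span (ZMod p) ((fun Lb => Lb.1 t.2.1 + Lb.2) '' 𝓛 t.2.1) ∧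
          d' ∉ Submodule.span (ZMod p) ((fun Lb => Lb.1 t.2.2 + Lb.2) '' 𝓛 t.2.2)).card : ℝ)) :
    (1 / 8 : ℝ) * ((Fintype.card (ZMod p) : ℝ) ^ (4 * d))⁻¹ *
        ((Finset.univ.filter fun f : (Fin n → ZMod p) → (Fin m → ZMod p) =>
          ∀ x, f x ∈ U x).card : ℝ) *
        (Fintype.card (Fin n → ZMod p) : ℝ) ^ 3 ≤
      ((((Finset.univ.filter fun f : (Fin n → ZMod p) → (Fin m → ZMod p) =>
            ∀ x, f x ∈ U x) ×ˢ
          (Finset.univ : Finset ((Fin n → ZMod p) × (Fin n → ZMod p) × (Fin n → ZMod p)))).filter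
          fun q =>
            q.1 (q.2.1 + q.2.2.1) - q.1 q.2.2.1 = q.1 (q.2.1 + q.2.2.2) - q.1 q.2.2.2 ∧
            q.1 q.2.2.1 ∈ U q.2.2.1 ∧
            q.1 q.2.2.1 ∉
              Submodule.span (ZMod p) ((fun Lb => Lb.1 q.2.2.1 + Lb.2) '' 𝓛 q.2.2.1) ∧
            q.1 q.2.2.2 ∈ U q.2.2.2 ∧
            q.1 q.2.2.2 ∉
              Submodule.span (ZMod p) ((fun Lb => Lb.1 q.2.2.2 + Lb.2) '' 𝓛 q.2.2.2)).card : ℝ) := by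
  classical
  have hp2 : 2 ≤ p := (Fact.out (p := p.Prime)).two_le
  have hp1 : 1 ≤ p := le_trans (by norm_num) hp2
  set Q := Fintype.card (Fin n → ZMod p) with hQdef
  set W := (Finset.univ.filter fun t : (Fin n → ZMod p) × (Fin n → ZMod p) × (Fin n → ZMod p) =>
        ∃ a ∈ U (t.1 + t.2.1), ∃ b ∈ U t.2.1, ∃ c ∈ U (t.1 + t.2.2), ∃ d' ∈ U t.2.2,
          a - b = c - d' ∧ a - b ≠ 0 ∧
          b ∉ Submodule.span (ZMod p) ((fun Lb => Lb.1 t.2.1 + Lb.2) '' 𝓛 t.2.1) ∧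
          d' ∉ Submodule.span (ZMod p) ((fun Lb => Lb.1 t.2.2 + Lb.2) '' 𝓛 t.2.2)) with hWdef
  -- witness extraction
  have hWmem : ∀ t ∈ W,
      ∃ a ∈ U (t.1 + t.2.1), ∃ b ∈ U t.2.1, ∃ c ∈ U (t.1 + t.2.2), ∃ d' ∈ U t.2.2,
        a - b = c - d' ∧ a - b ≠ 0 ∧
        b ∉ stmt13Sp p n m 𝓛 t.2.1 ∧ d' ∉ stmt13Sp p n m 𝓛 t.2.2 := by
    intro t ht
    rw [hWdef] at ht
    simp only [Finset.mem_filter] at ht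
    exact ht.2
  -- the big filtered set's cardinality as a sum over triples
  have hsum : (((Finset.univ.filter fun f : (Fin n → ZMod p) → (Fin m → ZMod p) =>
            ∀ x, f x ∈ U x) ×ˢ
          (Finset.univ : Finset ((Fin n → ZMod p) × (Fin n → ZMod p) × (Fin n → ZMod p)))).filter
          fun q =>
            q.1 (q.2.1 + q.2.2.1) - q.1 q.2.2.1 = q.1 (q.2.1 + q.2.2.2) - q.1 q.2.2.2 ∧
            q.1 q.2.2.1 ∈ U q.2.2.1 ∧
            q.1 q.2.2.1 ∉
              Submodule.span (ZMod p) ((fun Lb => Lb.1 q.2.2.1 + Lb.2) '' 𝓛 q.2.2.1) ∧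
            q.1 q.2.2.2 ∈ U q.2.2.2 ∧
            q.1 q.2.2.2 ∉
              Submodule.span (ZMod p) ((fun Lb => Lb.1 q.2.2.2 + Lb.2) '' 𝓛 q.2.2.2)).card
      = ∑ t : (Fin n → ZMod p) × (Fin n → ZMod p) × (Fin n → ZMod p),
          stmt13E p n m U 𝓛 t := by
    rw [Finset.card_eq_sum_card_fiberwise (f := Prod.snd)
      (t := (Finset.univ : Finset ((Fin n → ZMod p) × (Fin n → ZMod p) × (Fin n → ZMod p))))
      (fun x _ => Finset.mem_univ _)]
    refine Finset.sum_congr rfl fun t _ => ?_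
    rw [stmt13E]
    apply Finset.card_nbij' (i := Prod.fst) (j := fun f => (f, t))
    · intro q hq
      simp only [Finset.mem_coe, Finset.mem_filter, Finset.mem_product, Finset.mem_univ, and_true,
        true_and] at hq
      obtain ⟨⟨hq1, hq2⟩, hq3⟩ := hq
      subst hq3
      simp only [Finset.mem_coe, Finset.mem_filter, Finset.mem_univ, true_and] at hq1 ⊢
      exact ⟨hq1, hq2⟩
    · intro f hf
      simp only [Finset.mem_coe, Finset.mem_filter, Finset.mem_univ, true_and] at hf ⊢
      refine ⟨⟨?_, ?_⟩, trivial⟩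
      · simp only [Finset.mem_product, Finset.mem_filter, Finset.mem_univ, true_and, and_true]
        exact hf.1
      · exact hf.2
    · intro q hq
      simp only [Finset.mem_coe, Finset.mem_filter] at hq
      rw [← hq.2]
    · intro f _
      rfl
  -- N = (p^d)^Q
  have hNQ : (Finset.univ.filter fun f : (Fin n → ZMod p) → (Fin m → ZMod p) =>
      ∀ x, f x ∈ U x).card = (p ^ d) ^ Q := by
    have h := stmt13_count U hU (∅ : Finset (Fin n → ZMod p)) 0 (by simp)
    simp only [Finset.card_empty, Nat.sub_zero] at h
    rw [hQdef, ← h]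
    congr 1
    apply Finset.filter_congr
    intro f _
    simp
  -- charging: bad (degenerate) triples are mapped to (0, z, w)
  set B := W.filter (fun t : (Fin n → ZMod p) × (Fin n → ZMod p) × (Fin n → ZMod p) =>
    t.1 = t.2.1 - t.2.2 ∨ t.1 = t.2.2 - t.2.1) with hBdef
  set G := W.filter (fun t : (Fin n → ZMod p) × (Fin n → ZMod p) × (Fin n → ZMod p) =>
    ¬ (t.1 = t.2.1 - t.2.2 ∨ t.1 = t.2.2 - t.2.1)) with hGdef
  set I := B.image (fun t : (Fin n → ZMod p) × (Fin n → ZMod p) × (Fin n → ZMod p) =>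
    ((0 : Fin n → ZMod p), t.2.1, t.2.2)) with hIdef
  have hGB : B.card + G.card = W.card := by
    rw [hBdef, hGdef]
    exact Finset.card_filter_add_card_filter_not _
  have hfib : B.card ≤ 2 * I.card := by
    rw [hIdef]
    apply Finset.card_le_mul_card_image
    intro a ha
    have hsub : (B.filter fun x => ((0 : Fin n → ZMod p), x.2.1, x.2.2) = a) ⊆
        {(a.2.1 - a.2.2, a.2.1, a.2.2), (a.2.2 - a.2.1, a.2.1, a.2.2)} := by
      intro x hx
      simp only [Finset.mem_filter, hBdef] at hx
      obtain ⟨⟨hxW, hxbad⟩, hxa⟩ := hx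
      obtain ⟨x1, x2, x3⟩ := x
      subst hxa
      simp only [Finset.mem_insert, Finset.mem_singleton, Prod.mk.injEq]
      simpa using hxbad
    refine (Finset.card_le_card hsub).trans ?_
    refine (Finset.card_insert_le _ _).trans ?_
    simp
  have hI3 : ∀ t' ∈ I, 3 * (p ^ d) ^ Q ≤ p ^ (4 * d) * stmt13E p n m U 𝓛 t' := by
    intro t' ht'
    rw [hIdef] at ht'
    obtain ⟨t, htB, rfl⟩ := Finset.mem_image.mp ht'
    rw [hBdef] at htB
    have htW : t ∈ W := (Finset.mem_filter.mp htB).1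
    obtain ⟨a, ha, b, hb, c, hc, d', hd', heq, hne, hbs, hds⟩ := hWmem t htW
    rw [hQdef]
    exact stmt13_bad U 𝓛 hU t.2.1 t.2.2 b d' hb hd' hbs hds
  have hG4 : ∀ t ∈ G, (p ^ d) ^ Q ≤ p ^ (4 * d) * stmt13E p n m U 𝓛 t := by
    intro t htG
    rw [hGdef] at htG
    obtain ⟨htW, hnbad⟩ := Finset.mem_filter.mp htG
    push_neg at hnbad
    obtain ⟨a, ha, b, hb, c, hc, d', hd', heq, hne, hbs, hds⟩ := hWmem t htW
    rw [hQdef]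
    exact stmt13_good U 𝓛 hU t.1 t.2.1 t.2.2 a b c d' ha hb hc hd' heq hbs hds hnbad.1 hnbad.2
  -- the main counting inequality, in ℕ
  have hmain : (p ^ d) ^ Q * W.card ≤
      p ^ (4 * d) * ∑ t : (Fin n → ZMod p) × (Fin n → ZMod p) × (Fin n → ZMod p),
        stmt13E p n m U 𝓛 t := by
    have h1 : ∑ t ∈ (G \ I) ∪ I, p ^ (4 * d) * stmt13E p n m U 𝓛 t ≤
        ∑ t : (Fin n → ZMod p) × (Fin n → ZMod p) × (Fin n → ZMod p),
          p ^ (4 * d) * stmt13E p n m U 𝓛 t :=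
      Finset.sum_le_sum_of_subset (Finset.subset_univ _)
    have h2 : ∑ t ∈ (G \ I) ∪ I, p ^ (4 * d) * stmt13E p n m U 𝓛 t =
        (∑ t ∈ G \ I, p ^ (4 * d) * stmt13E p n m U 𝓛 t) +
        ∑ t ∈ I, p ^ (4 * d) * stmt13E p n m U 𝓛 t :=
      Finset.sum_union Finset.sdiff_disjoint
    have h3 : (G \ I).card * ((p ^ d) ^ Q) ≤
        ∑ t ∈ G \ I, p ^ (4 * d) * stmt13E p n m U 𝓛 t := by
      have := Finset.card_nsmul_le_sum (G \ I) (fun t => p ^ (4 * d) * stmt13E p n m U 𝓛 t)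
        ((p ^ d) ^ Q) (fun t ht => hG4 t (Finset.mem_sdiff.mp ht).1)
      simpa [smul_eq_mul] using this
    have h4 : I.card * (3 * (p ^ d) ^ Q) ≤
        ∑ t ∈ I, p ^ (4 * d) * stmt13E p n m U 𝓛 t := by
      have := Finset.card_nsmul_le_sum I (fun t => p ^ (4 * d) * stmt13E p n m U 𝓛 t)
        (3 * (p ^ d) ^ Q) (fun t ht => hI3 t ht)
      simpa [smul_eq_mul] using this
    have h5 : G.card - I.card ≤ (G \ I).card := Finset.le_card_sdiff I G
    have hWle : W.card ≤ (G \ I).card + 3 * I.card := by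
      calc W.card = B.card + G.card := hGB.symm
        _ ≤ 2 * I.card + ((G \ I).card + I.card) :=
            Nat.add_le_add hfib (tsub_le_iff_right.mp h5)
        _ = (G \ I).card + 3 * I.card := by ring
    calc (p ^ d) ^ Q * W.card = W.card * (p ^ d) ^ Q := mul_comm _ _
      _ ≤ ((G \ I).card + 3 * I.card) * (p ^ d) ^ Q := Nat.mul_le_mul_right _ hWle
      _ = (G \ I).card * ((p ^ d) ^ Q) + I.card * (3 * (p ^ d) ^ Q) := by ring
      _ ≤ (∑ t ∈ G \ I, p ^ (4 * d) * stmt13E p n m U 𝓛 t) +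
          ∑ t ∈ I, p ^ (4 * d) * stmt13E p n m U 𝓛 t := Nat.add_le_add h3 h4
      _ = ∑ t ∈ (G \ I) ∪ I, p ^ (4 * d) * stmt13E p n m U 𝓛 t := h2.symm
      _ ≤ ∑ t : (Fin n → ZMod p) × (Fin n → ZMod p) × (Fin n → ZMod p),
          p ^ (4 * d) * stmt13E p n m U 𝓛 t := h1
      _ = p ^ (4 * d) * ∑ t : (Fin n → ZMod p) × (Fin n → ZMod p) × (Fin n → ZMod p),
          stmt13E p n m U 𝓛 t := (Finset.mul_sum _ _ _).symm
  -- conclude over ℝ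
  haveI : NeZero p := ⟨by rintro rfl; exact absurd hp2 (by norm_num)⟩
  rw [ZMod.card, hsum]
  have hppos : (0 : ℝ) < (p : ℝ) ^ (4 * d) := by
    have : (0 : ℝ) < (p : ℝ) := by exact_mod_cast lt_of_lt_of_le (show 0 < 2 by norm_num) hp2
    positivity
  have hcast : ((Finset.univ.filter fun f : (Fin n → ZMod p) → (Fin m → ZMod p) =>
        ∀ x, f x ∈ U x).card : ℝ) * (W.card : ℝ) ≤
      (p : ℝ) ^ (4 * d) *
        ((∑ t : (Fin n → ZMod p) × (Fin n → ZMod p) × (Fin n → ZMod p),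
          stmt13E p n m U 𝓛 t : ℕ) : ℝ) := by
    have h : (Finset.univ.filter fun f : (Fin n → ZMod p) → (Fin m → ZMod p) =>
        ∀ x, f x ∈ U x).card * W.card ≤
        p ^ (4 * d) * ∑ t : (Fin n → ZMod p) × (Fin n → ZMod p) × (Fin n → ZMod p),
          stmt13E p n m U 𝓛 t := by
      rw [hNQ]; exact hmain
    exact_mod_cast h
  calc (1 / 8 : ℝ) * ((p : ℝ) ^ (4 * d))⁻¹ *
        ((Finset.univ.filter fun f : (Fin n → ZMod p) → (Fin m → ZMod p) =>
          ∀ x, f x ∈ U x).card : ℝ) * (Q : ℝ) ^ 3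
      ≤ (1 / 8 : ℝ) * ((p : ℝ) ^ (4 * d))⁻¹ *
        ((Finset.univ.filter fun f : (Fin n → ZMod p) → (Fin m → ZMod p) =>
          ∀ x, f x ∈ U x).card : ℝ) * (8 * W.card) := by
        apply mul_le_mul_of_nonneg_left hWitness
        positivity
    _ = ((p : ℝ) ^ (4 * d))⁻¹ *
        (((Finset.univ.filter fun f : (Fin n → ZMod p) → (Fin m → ZMod p) =>
          ∀ x, f x ∈ U x).card : ℝ) * (W.card : ℝ)) := by ring
    _ ≤ ((p : ℝ) ^ (4 * d))⁻¹ * ((p : ℝ) ^ (4 * d) *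
        ((∑ t : (Fin n → ZMod p) × (Fin n → ZMod p) × (Fin n → ZMod p),
          stmt13E p n m U 𝓛 t : ℕ) : ℝ)) := by
        apply mul_le_mul_of_nonneg_left hcast
        positivity
    _ = ((∑ t : (Fin n → ZMod p) × (Fin n → ZMod p) × (Fin n → ZMod p),
          stmt13E p n m U 𝓛 t : ℕ) : ℝ) := by
        rw [← mul_assoc, inv_mul_cancel₀ hppos.ne', one_mul]
end
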